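/- Let Z and P be real symmetric positive semidefinite n×n matrices such that every eigenvalue λ ∈ ℂ of the matrix Z·P (regarded as a complex matrix via the entrywise embedding ℝ → ℂ) satisfies |λ| < 1. Then the matrix I − P·Z is invertible and W = Z·(I − P·Z)⁻¹ is a real symmetric positive semidefinite matrix. -/

import Mathlib

open Matrix

/-- If a real matrix `A` has a real eigenvector with eigenvalue `μ`, then `μ` (as a complex
number) lies in the complex spectrum of the entrywise complexification of `A`. -/
lemma real_eig_mem_complex_spectrum {n : ℕ} (A : Matrix (Fin n) (Fin n) ℝ) (μ : ℝ)
    (v : Fin n → ℝ) (hv : v ≠ 0) (h : A *ᵥ v = μ • v) :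
    (μ : ℂ) ∈ spectrum ℂ (A.map Complex.ofReal) := by
  rw [spectrum.mem_iff]
  intro hunit
  rw [Matrix.isUnit_iff_isUnit_det] at hunit
  have hdetR : (μ • (1 : Matrix (Fin n) (Fin n) ℝ) - A).det = 0 := by
    rw [← Matrix.exists_mulVec_eq_zero_iff]
    exact ⟨v, hv, by simp [Matrix.sub_mulVec, h, Matrix.smul_mulVec]⟩
  have hcast : ((μ • (1 : Matrix (Fin n) (Fin n) ℝ) - A).map Complex.ofReal)
      = (Complex.ofRealHom : ℝ →+* ℂ).mapMatrix (μ • (1 : Matrix (Fin n) (Fin n) ℝ) - A) := rfl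
  have hmap : ((μ • (1 : Matrix (Fin n) (Fin n) ℝ) - A).map Complex.ofReal)
      = algebraMap ℂ (Matrix (Fin n) (Fin n) ℂ) (μ : ℂ) - A.map Complex.ofReal := by
    ext i j
    by_cases hij : i = j <;>
      simp [Matrix.map_apply, Matrix.algebraMap_matrix_apply, Matrix.one_apply, hij,
        Complex.ofReal_sub, Complex.ofReal_mul]
  have : (algebraMap ℂ (Matrix (Fin n) (Fin n) ℂ) (μ : ℂ) - A.map Complex.ofReal).det = 0 := by
    rw [← hmap, hcast, ← RingHom.map_det, hdetR]
    simp
  rw [this] at hunit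
  exact hunit.ne_zero rfl

/-- If `Z, P` are real symmetric positive semidefinite and every complex
eigenvalue of `Z·P` has modulus less than 1, then `I − P·Z` is invertible and
`W = Z·(I − P·Z)⁻¹` is symmetric positive semidefinite. -/
theorem stmt_4 {n : ℕ} (Z P : Matrix (Fin n) (Fin n) ℝ)
    (hZ : Z.PosSemidef) (hP : P.PosSemidef)
    (hspec : ∀ lam : ℂ, lam ∈ spectrum ℂ ((Z * P).map (Complex.ofReal)) →
      ‖lam‖ < 1) :
    IsUnit (1 - P * Z).det ∧ (Z * (1 - P * Z)⁻¹).PosSemidef := by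
  classical
  -- Step 1: `I - P*Z` is invertible.
  have hdet : IsUnit (1 - P * Z).det := by
    by_contra hcon
    have hdet0 : (1 - P * Z).det = 0 := by
      rcases eq_or_ne ((1 - P * Z).det) 0 with h | h
      · exact h
      · exact absurd (isUnit_iff_ne_zero.mpr h) hcon
    obtain ⟨v, hv, hv0⟩ := (Matrix.exists_mulVec_eq_zero_iff).mpr hdet0
    have hPZ : (P * Z) *ᵥ v = v := by
      have := hv0
      rw [Matrix.sub_mulVec, sub_eq_zero, Matrix.one_mulVec] at this
      exact this.symm
    have hZv : Z *ᵥ v ≠ 0 := by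
      intro h0
      apply hv
      calc v = (P * Z) *ᵥ v := hPZ.symm
        _ = P *ᵥ (Z *ᵥ v) := by rw [Matrix.mulVec_mulVec]
        _ = 0 := by rw [h0, Matrix.mulVec_zero]
    have heig : (Z * P) *ᵥ (Z *ᵥ v) = (1 : ℝ) • (Z *ᵥ v) := by
      rw [one_smul, Matrix.mulVec_mulVec, Matrix.mul_assoc, ← Matrix.mulVec_mulVec, hPZ]
    have := hspec 1 (by simpa using real_eig_mem_complex_spectrum (Z * P) 1 (Z *ᵥ v) hZv heig)
    simp at this
  -- Step 2: square root of Z.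
  set S := (open scoped MatrixOrder in CFC.sqrt Z) with hSdef
  have hS : S.PosSemidef := (open scoped MatrixOrder in (CFC.sqrt_nonneg Z).posSemidef)
  have hSS : S * S = Z := (open scoped MatrixOrder in CFC.sqrt_mul_sqrt_self Z hZ.nonneg)
  have hSH : Sᴴ = S := hS.1
  -- Step 3: every real spectral value of M = S*P*S is < 1.
  set M := S * P * S with hMdef
  have hM : M.PosSemidef := by
    have := hP.mul_mul_conjTranspose_same S
    rwa [hSH] at this
  have hspecM : ∀ μ : ℝ, μ ∈ spectrum ℝ M → μ < 1 := by
    intro μ hμ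
    rw [spectrum.mem_iff] at hμ
    have hdet0 : (μ • (1 : Matrix (Fin n) (Fin n) ℝ) - M).det = 0 := by
      by_contra h
      exact hμ (by
        rw [Matrix.isUnit_iff_isUnit_det]
        have : algebraMap ℝ (Matrix (Fin n) (Fin n) ℝ) μ = μ • 1 := Algebra.algebraMap_eq_smul_one μ
        rw [this]
        exact isUnit_iff_ne_zero.mpr h)
    obtain ⟨v, hv, hv0⟩ := (Matrix.exists_mulVec_eq_zero_iff).mpr hdet0
    have hMv : M *ᵥ v = μ • v := by
      rw [Matrix.sub_mulVec, sub_eq_zero, Matrix.smul_mulVec, Matrix.one_mulVec] at hv0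
      exact hv0.symm
    by_cases hSv : S *ᵥ v = 0
    · -- then μ = 0
      have : μ • v = 0 := by
        rw [← hMv, hMdef, ← Matrix.mulVec_mulVec, hSv, Matrix.mulVec_zero]
      have hμ0 : μ = 0 := by
        by_contra h
        exact hv (by simpa [h] using congrArg (fun w => μ⁻¹ • w) this)
      linarith
    · have heig : (Z * P) *ᵥ (S *ᵥ v) = μ • (S *ᵥ v) := by
        calc (Z * P) *ᵥ (S *ᵥ v) = (S * (S * P * S)) *ᵥ v := by
              rw [Matrix.mulVec_mulVec, ← hSS]; simp only [Matrix.mul_assoc]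
          _ = S *ᵥ (M *ᵥ v) := by rw [Matrix.mulVec_mulVec, hMdef]
          _ = S *ᵥ (μ • v) := by rw [hMv]
          _ = μ • (S *ᵥ v) := by rw [Matrix.mulVec_smul]
      have habs := hspec (μ : ℂ) (real_eig_mem_complex_spectrum (Z * P) μ (S *ᵥ v) hSv heig)
      calc μ ≤ |μ| := le_abs_self μ
        _ = ‖(μ : ℂ)‖ := by simp
        _ < 1 := habs
  -- Step 4: 1 - M is positive definite.
  have hone : (1 : ℝ) ∉ spectrum ℝ M := fun h => absurd (hspecM 1 h) (lt_irrefl 1)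
  have hdetM : (1 - M).det ≠ 0 := by
    intro h0
    apply hone
    rw [spectrum.mem_iff, _root_.map_one]
    intro hu
    rw [Matrix.isUnit_iff_isUnit_det, h0] at hu
    exact hu.ne_zero rfl
  have h1M : (1 - M).PosDef := by
    have hherm : (1 - M).IsHermitian := (Matrix.isHermitian_one).sub hM.1
    have hpsd : (1 - M).PosSemidef := by
      apply hherm.posSemidef_iff_eigenvalues_nonneg.mpr
      intro i
      have hmem := hherm.eigenvalues_mem_spectrum_real i
      set ν := hherm.eigenvalues i with hν
      have : (1 - ν) ∈ spectrum ℝ M := by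
        rw [spectrum.mem_iff] at hmem ⊢
        intro hunit
        apply hmem
        have heq : algebraMap ℝ (Matrix (Fin n) (Fin n) ℝ) (1 - ν) - M
            = -(algebraMap ℝ (Matrix (Fin n) (Fin n) ℝ) ν - (1 - M)) := by
          simp [Algebra.algebraMap_eq_smul_one, sub_smul]
          abel
        rw [heq] at hunit
        simpa using hunit.neg
      linarith [hspecM _ this, (Pi.zero_apply i : (0 : Fin n → ℝ) i = 0)]
    refine Matrix.PosDef.of_dotProduct_mulVec_pos hpsd.1 fun x hx => lt_of_le_of_ne (hpsd.dotProduct_mulVec_nonneg x) fun heq => ?_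
    have hzero : (1 - M) *ᵥ x = 0 := (hpsd.dotProduct_mulVec_zero_iff x).mp heq.symm
    exact hdetM (Matrix.exists_mulVec_eq_zero_iff.mp ⟨x, hx, hzero⟩)
  have hdet1M : IsUnit (1 - M).det := h1M.det_pos.ne'.isUnit
  -- Step 5: W = S * (1-M)⁻¹ * S.
  set T := (1 - M)⁻¹ with hTdef
  have hT : T.PosDef := h1M.inv
  have key : S * T * S * (1 - P * Z) = Z := by
    have expand : S * (1 - P * Z) = (1 - M) * S := by
      rw [hMdef, ← hSS, Matrix.mul_sub, Matrix.sub_mul, Matrix.mul_one, Matrix.one_mul]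
      simp only [Matrix.mul_assoc]
    calc S * T * S * (1 - P * Z) = S * T * ((1 - M) * S) := by
          rw [Matrix.mul_assoc (S * T), expand]
      _ = S * (T * (1 - M)) * S := by simp only [Matrix.mul_assoc]
      _ = S * S := by rw [hTdef, Matrix.nonsing_inv_mul _ hdet1M, Matrix.mul_one]
      _ = Z := hSS
  have hW : Z * (1 - P * Z)⁻¹ = S * T * S := by
    calc Z * (1 - P * Z)⁻¹ = (S * T * S * (1 - P * Z)) * (1 - P * Z)⁻¹ := by rw [key]
      _ = S * T * S * ((1 - P * Z) * (1 - P * Z)⁻¹) := by rw [Matrix.mul_assoc]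
      _ = S * T * S := by rw [Matrix.mul_nonsing_inv _ hdet, Matrix.mul_one]
  refine ⟨hdet, ?_⟩
  rw [hW]
  have := hT.posSemidef.mul_mul_conjTranspose_same S
  rwa [hSH] at this
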